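/- Let X be a separable metric measure space, let 𝓑 be a Busemann–Feller basis on X, let 0 < s ≤ 1 and 1 < p < ∞, and let Cap be the M^{s,p}-capacity. Assume every u ∈ M^{s,p}(X) is locally integrable, and write u_B = μ(B)^{-1}∫_B u dμ and M_𝓑 u(x) = sup{|u|_B : x ∈ B ∈ 𝓑}. Consider the claims: (1) for every u ∈ M^{s,p}(X), Cap({x ∈ X : M_𝓑 u(x) > λ}) → 0 as λ → ∞; (2) for every λ > 0 and every sequence (u_k) in M^{s,p}(X) with ‖u_k‖_{M^{s,p}} → 0, we have Cap({x ∈ X : M_𝓑 u_k(x) > λ}) → 0 as k → ∞; (3) for every quasicontinuous u ∈ M^{s,p}(X) there exists a set E with Cap(E) = 0 such that lim_{𝓑∋B→x} u_B = u(x) for every x ∈ X∖E. Then (1) implies (2), and (2) implies (3). -/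

import Mathlib

open MeasureTheory Metric Filter Set Topology
open scoped ENNReal NNReal

/-- The `γ`-median of `f` over `A`:
`m_f^γ(A) = inf {a ∈ ℝ : μ({x ∈ A : f(x) > a}) < γ·μ(A)}`. -/
noncomputable def med {X : Type*} [MeasurableSpace X] (μ : Measure X)
    (f : X → EReal) (A : Set X) (γ : ℝ) : ℝ :=
  sInf {a : ℝ | μ {x ∈ A | (a : EReal) < f x} < ENNReal.ofReal γ * μ A}

/-- `f ∈ L⁰(X)`: `f` is measurable and finite almost everywhere. -/
def MemL0 {X : Type*} [MeasurableSpace X] (μ : Measure X) (f : X → EReal) : Prop :=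
  Measurable f ∧ ∀ᵐ x ∂μ, f x ≠ ⊤ ∧ f x ≠ ⊥

/-- A differentiation basis on a metric measure space: each `𝓑(x)` consists of bounded
measurable sets of positive measure containing `x`, with sets of arbitrarily small diameter. -/
structure IsDiffBasis {X : Type*} [MetricSpace X] [MeasurableSpace X]
    (μ : Measure X) (𝓑 : X → Set (Set X)) : Prop where
  mem_of : ∀ x B, B ∈ 𝓑 x → x ∈ B
  measurableSet : ∀ x B, B ∈ 𝓑 x → MeasurableSet B
  bounded : ∀ x B, B ∈ 𝓑 x → Bornology.IsBounded B
  pos : ∀ x B, B ∈ 𝓑 x → 0 < μ B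
  small : ∀ x, ∀ ε : ℝ, 0 < ε → ∃ B ∈ 𝓑 x, diam B < ε

/-- A Busemann–Feller basis: a differentiation basis whose members are open and such that
`x ∈ B ∈ 𝓑` implies `B ∈ 𝓑(x)`. -/
structure IsBFBasis {X : Type*} [MetricSpace X] [MeasurableSpace X]
    (μ : Measure X) (𝓑 : X → Set (Set X)) extends IsDiffBasis μ 𝓑 : Prop where
  isOpen : ∀ x B, B ∈ 𝓑 x → IsOpen B
  feller : ∀ x y B, B ∈ 𝓑 y → x ∈ B → B ∈ 𝓑 x

/-- `lim_{𝓑 ∋ B → x} F(B) = L`: the limit as `diam B → 0` over `B ∈ 𝓑(x)`. -/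
def BasisLim {X : Type*} [MetricSpace X] (𝓑 : X → Set (Set X)) (x : X)
    (F : Set X → ℝ) (L : ℝ) : Prop :=
  ∀ ε : ℝ, 0 < ε → ∃ δ : ℝ, 0 < δ ∧ ∀ B ∈ 𝓑 x, diam B < δ → |F B - L| < ε

/-- A density basis: for every measurable `A`, `lim_{𝓑∋B→x} μ(A∩B)/μ(B) = χ_A(x)` a.e. -/
def IsDensityBasis {X : Type*} [MetricSpace X] [MeasurableSpace X]
    (μ : Measure X) (𝓑 : X → Set (Set X)) : Prop :=
  ∀ A : Set X, MeasurableSet A → ∀ᵐ x ∂μ,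
    BasisLim 𝓑 x (fun B => (μ (A ∩ B) / μ B).toReal) (A.indicator (fun _ => (1 : ℝ)) x)

/-- The `γ`-median maximal function `M^γ_𝓑 f(x) = sup {m^γ_{|f|}(B) : x ∈ B ∈ 𝓑}`. -/
noncomputable def medMax {X : Type*} [MetricSpace X] [MeasurableSpace X] (μ : Measure X)
    (𝓑 : X → Set (Set X)) (f : X → EReal) (γ : ℝ) (x : X) : EReal :=
  ⨆ (B : Set X) (_ : ∃ y, B ∈ 𝓑 y) (_ : x ∈ B),
    (med μ (fun z => max (f z) (-f z)) B γ : EReal)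

/-- The `L^p`-(quasi)norm of an extended-real valued function, `0 < p < ∞`. -/
noncomputable def lpN {X : Type*} [MeasurableSpace X] (μ : Measure X) (p : ℝ)
    (f : X → EReal) : ℝ≥0∞ :=
  (∫⁻ x, (f x).abs ^ p ∂μ) ^ (1 / p)

/-- `g` is an `s`-gradient of `u`:
`|u(x) − u(y)| ≤ d(x,y)^s (g(x) + g(y))` for all `x, y` outside a null set. -/
def IsSGrad {X : Type*} [MetricSpace X] [MeasurableSpace X] (μ : Measure X) (s : ℝ)
    (u : X → ℝ) (g : X → ℝ≥0∞) : Prop :=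
  Measurable g ∧ ∃ E : Set X, μ E = 0 ∧ ∀ x ∉ E, ∀ y ∉ E,
    ENNReal.ofReal |u x - u y| ≤ ENNReal.ofReal (dist x y ^ s) * (g x + g y)

/-- The Hajłasz norm `‖u‖_{M^{s,p}} = ‖u‖_{L^p} + inf_{g ∈ D^s(u)} ‖g‖_{L^p}`. -/
noncomputable def hajNorm {X : Type*} [MetricSpace X] [MeasurableSpace X] (μ : Measure X)
    (s p : ℝ) (u : X → ℝ) : ℝ≥0∞ :=
  (∫⁻ x, ENNReal.ofReal |u x| ^ p ∂μ) ^ (1 / p) +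
    ⨅ (g : X → ℝ≥0∞) (_ : IsSGrad μ s u g), (∫⁻ x, g x ^ p ∂μ) ^ (1 / p)

/-- `u ∈ M^{s,p}(X)`: the Hajłasz space. -/
def MemHaj {X : Type*} [MetricSpace X] [MeasurableSpace X] (μ : Measure X)
    (s p : ℝ) (u : X → ℝ) : Prop :=
  Measurable u ∧ hajNorm μ s p u < ⊤

/-- The `M^{s,p}`-capacity: `Cap(E) = inf {‖u‖_{M^{s,p}}^p : u ≥ 1 on an open nbhd of E}`. -/
noncomputable def hCap {X : Type*} [MetricSpace X] [MeasurableSpace X] (μ : Measure X)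
    (s p : ℝ) (E : Set X) : ℝ≥0∞ :=
  ⨅ (u : X → ℝ) (_ : MemHaj μ s p u)
    (_ : ∃ U : Set X, IsOpen U ∧ E ⊆ U ∧ ∀ x ∈ U, 1 ≤ u x),
    hajNorm μ s p u ^ p

/-- `u` is quasicontinuous w.r.t. the `M^{s,p}`-capacity. -/
def QuasiCont {X : Type*} [MetricSpace X] [MeasurableSpace X] (μ : Measure X)
    (s p : ℝ) (u : X → ℝ) : Prop :=
  ∀ ε : ℝ, 0 < ε → ∃ F : Set X, hCap μ s p F < ENNReal.ofReal ε ∧ ContinuousOn u Fᶜ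

/-- The (basis) maximal function `M_𝓑 u(x) = sup {⨍_B |u| dμ : x ∈ B ∈ 𝓑}`. -/
noncomputable def intMax {X : Type*} [MetricSpace X] [MeasurableSpace X] (μ : Measure X)
    (𝓑 : X → Set (Set X)) (u : X → ℝ) (x : X) : ℝ≥0∞ :=
  ⨆ (B : Set X) (_ : ∃ y, B ∈ 𝓑 y) (_ : x ∈ B),
    (∫⁻ z in B, ENNReal.ofReal |u z| ∂μ) / μ B


set_option linter.unusedSectionVars false
set_option linter.unusedVariables false

section Helpers

variable {X : Type*} [MetricSpace X] [MeasurableSpace X]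

/-- The `L^p` functional on `ℝ≥0∞`-valued functions. -/
noncomputable def eN (μ : Measure X) (p : ℝ) (f : X → ℝ≥0∞) : ℝ≥0∞ :=
  (∫⁻ x, f x ^ p ∂μ) ^ (1/p)

theorem rpow_rpow_inv {x : ℝ≥0∞} {p : ℝ} (hp : p ≠ 0) : (x ^ p) ^ (1/p) = x := by
  rw [← ENNReal.rpow_mul, mul_one_div_cancel hp, ENNReal.rpow_one]

theorem rpow_inv_rpow {x : ℝ≥0∞} {p : ℝ} (hp : p ≠ 0) : (x ^ (1/p)) ^ p = x := by
  rw [← ENNReal.rpow_mul, one_div_mul_cancel hp, ENNReal.rpow_one]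

theorem eN_mono {μ : Measure X} {p : ℝ} (hp : 0 < p) {f g : X → ℝ≥0∞}
    (h : ∀ᵐ x ∂μ, f x ≤ g x) : eN μ p f ≤ eN μ p g := by
  refine ENNReal.rpow_le_rpow (lintegral_mono_ae (h.mono fun x hx => ?_)) (by positivity)
  exact ENNReal.rpow_le_rpow hx hp.le

theorem measurable_rpow_comp {f : X → ℝ≥0∞} (hf : Measurable f) (p : ℝ) :
    Measurable fun x => f x ^ p :=
  ENNReal.continuous_rpow_const.measurable.comp hf

theorem eN_lt_top_iff {μ : Measure X} {p : ℝ} (hp : 0 < p) {f : X → ℝ≥0∞} :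
    eN μ p f < ⊤ ↔ ∫⁻ x, f x ^ p ∂μ < ⊤ := by
  constructor
  · intro h
    by_contra hc
    rw [not_lt, top_le_iff] at hc
    rw [eN, hc, ENNReal.top_rpow_of_pos (by positivity)] at h
    exact (lt_irrefl _ h).elim
  · intro h
    exact ENNReal.rpow_lt_top_of_nonneg (by positivity) h.ne

theorem eN_const_mul {μ : Measure X} {p : ℝ} (hp : 0 < p) {f : X → ℝ≥0∞} (hf : Measurable f)
    {c : ℝ≥0∞} (hc : c ≠ ⊤) : eN μ p (fun x => c * f x) = c * eN μ p f := by
  unfold eN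
  have h1 : ∀ x, (c * f x) ^ p = c ^ p * f x ^ p := fun x =>
    ENNReal.mul_rpow_of_nonneg _ _ hp.le
  simp only [h1]
  rw [lintegral_const_mul _ (measurable_rpow_comp hf p),
    ENNReal.mul_rpow_of_nonneg _ _ (by positivity : (0:ℝ) ≤ 1/p), rpow_rpow_inv hp.ne']

theorem eN_add_le {μ : Measure X} {p : ℝ} (hp : 1 ≤ p) {f g : X → ℝ≥0∞}
    (hf : AEMeasurable f μ) (hg : AEMeasurable g μ) :
    eN μ p (fun x => f x + g x) ≤ eN μ p f + eN μ p g :=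
  ENNReal.lintegral_Lp_add_le hf hg hp

theorem iSup_rpow_of_monotone {u : ℕ → ℝ≥0∞} (hu : Monotone u) {p : ℝ} (hp : 0 < p) :
    (⨆ n, u n) ^ p = ⨆ n, u n ^ p := by
  have h1 : Tendsto (fun n => u n ^ p) atTop (𝓝 ((⨆ n, u n) ^ p)) :=
    (ENNReal.continuous_rpow_const.tendsto _).comp (tendsto_atTop_iSup hu)
  have h2 : Tendsto (fun n => u n ^ p) atTop (𝓝 (⨆ n, u n ^ p)) :=
    tendsto_atTop_iSup fun a b hab => ENNReal.rpow_le_rpow (hu hab) hp.le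
  exact tendsto_nhds_unique h1 h2

theorem eN_tsum_le {μ : Measure X} {p : ℝ} (hp : 1 ≤ p) {f : ℕ → X → ℝ≥0∞}
    (hf : ∀ n, Measurable (f n)) :
    eN μ p (fun x => ∑' n, f n x) ≤ ∑' n, eN μ p (f n) := by
  have hp0 : (0:ℝ) < p := lt_of_lt_of_le zero_lt_one hp
  have hmeas : ∀ N : ℕ, Measurable fun x => ∑ j ∈ Finset.range N, f j x := fun N =>
    Finset.measurable_sum _ fun j _ => hf j
  have hfin : ∀ N : ℕ, eN μ p (fun x => ∑ j ∈ Finset.range N, f j x)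
      ≤ ∑ j ∈ Finset.range N, eN μ p (f j) := by
    intro N
    induction N with
    | zero =>
      simp only [Finset.range_zero, Finset.sum_empty]
      rw [eN]
      simp only [ENNReal.zero_rpow_of_pos hp0, lintegral_zero,
        ENNReal.zero_rpow_of_pos (by positivity : (0:ℝ) < 1/p), le_refl]
    | succ N ih =>
      simp only [Finset.sum_range_succ]
      exact le_trans (eN_add_le hp (hmeas N).aemeasurable (hf N).aemeasurable)
        (add_le_add_left ih _)
  have key : (fun x => ∑' n, f n x) = fun x => ⨆ N, ∑ j ∈ Finset.range N, f j x := by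
    funext x; exact ENNReal.tsum_eq_iSup_nat
  have hmono : ∀ x, Monotone fun N => ∑ j ∈ Finset.range N, f j x := fun x a b h =>
    Finset.sum_le_sum_of_subset (Finset.range_subset_range.2 h)
  rw [key, eN]
  calc (∫⁻ x, (⨆ N, ∑ j ∈ Finset.range N, f j x) ^ p ∂μ) ^ (1/p)
      = (∫⁻ x, ⨆ N, (∑ j ∈ Finset.range N, f j x) ^ p ∂μ) ^ (1/p) := by
        congr 1; apply lintegral_congr; intro x
        exact iSup_rpow_of_monotone (hmono x) hp0
    _ = (⨆ N, ∫⁻ x, (∑ j ∈ Finset.range N, f j x) ^ p ∂μ) ^ (1/p) := by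
        congr 1
        exact lintegral_iSup (fun N => measurable_rpow_comp (hmeas N) p)
          (fun a b h x => ENNReal.rpow_le_rpow (hmono x h) hp0.le)
    _ ≤ ((∑' n, eN μ p (f n)) ^ p) ^ (1/p) := by
        refine ENNReal.rpow_le_rpow (iSup_le fun N => ?_) (by positivity)
        have h1 : ∫⁻ x, (∑ j ∈ Finset.range N, f j x) ^ p ∂μ
            = (eN μ p (fun x => ∑ j ∈ Finset.range N, f j x)) ^ p :=
          (rpow_inv_rpow hp0.ne').symm
        rw [h1]
        exact ENNReal.rpow_le_rpow ((hfin N).trans (ENNReal.sum_le_tsum _)) hp0.le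
    _ = ∑' n, eN μ p (f n) := rpow_rpow_inv hp0.ne'

end Helpers

section Helpers2

variable {X : Type*} [MetricSpace X] [MeasurableSpace X] {μ : Measure X} {s p : ℝ}

theorem IsSGrad.abs {u : X → ℝ} {g : X → ℝ≥0∞} (h : IsSGrad μ s u g) :
    IsSGrad μ s (fun x => |u x|) g := by
  obtain ⟨hg, E, hE, hpt⟩ := h
  refine ⟨hg, E, hE, fun x hx y hy => ?_⟩
  refine le_trans (ENNReal.ofReal_le_ofReal ?_) (hpt x hx y hy)
  exact abs_abs_sub_abs_le_abs_sub _ _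

theorem IsSGrad.const_mul {u : X → ℝ} {g : X → ℝ≥0∞} (h : IsSGrad μ s u g) (c : ℝ) :
    IsSGrad μ s (fun x => c * u x) (fun x => ENNReal.ofReal |c| * g x) := by
  obtain ⟨hg, E, hE, hpt⟩ := h
  refine ⟨measurable_const.mul hg, E, hE, fun x hx y hy => ?_⟩
  have h1 : |c * u x - c * u y| = |c| * |u x - u y| := by
    rw [← abs_mul]; ring_nf
  rw [h1, ENNReal.ofReal_mul (abs_nonneg c)]
  calc ENNReal.ofReal |c| * ENNReal.ofReal |u x - u y|
      ≤ ENNReal.ofReal |c| * (ENNReal.ofReal (dist x y ^ s) * (g x + g y)) :=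
        mul_le_mul_right (hpt x hx y hy) _
    _ = ENNReal.ofReal (dist x y ^ s) *
        (ENNReal.ofReal |c| * g x + ENNReal.ofReal |c| * g y) := by ring

theorem IsSGrad.add {u v : X → ℝ} {g h : X → ℝ≥0∞} (hu : IsSGrad μ s u g)
    (hv : IsSGrad μ s v h) :
    IsSGrad μ s (fun x => u x + v x) (fun x => g x + h x) := by
  obtain ⟨hg, E, hE, hptu⟩ := hu
  obtain ⟨hh, F, hF, hptv⟩ := hv
  refine ⟨hg.add hh, E ∪ F, measure_union_null hE hF, fun x hx y hy => ?_⟩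
  have hxE : x ∉ E := fun h' => hx (Set.mem_union_left _ h')
  have hxF : x ∉ F := fun h' => hx (Set.mem_union_right _ h')
  have hyE : y ∉ E := fun h' => hy (Set.mem_union_left _ h')
  have hyF : y ∉ F := fun h' => hy (Set.mem_union_right _ h')
  calc ENNReal.ofReal |(u x + v x) - (u y + v y)|
      ≤ ENNReal.ofReal (|u x - u y| + |v x - v y|) := by
        apply ENNReal.ofReal_le_ofReal
        have : (u x + v x) - (u y + v y) = (u x - u y) + (v x - v y) := by ring
        rw [this]; exact abs_add_le _ _
    _ = ENNReal.ofReal |u x - u y| + ENNReal.ofReal |v x - v y| :=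
        ENNReal.ofReal_add (abs_nonneg _) (abs_nonneg _)
    _ ≤ ENNReal.ofReal (dist x y ^ s) * (g x + g y) +
        ENNReal.ofReal (dist x y ^ s) * (h x + h y) :=
        add_le_add (hptu x hxE y hyE) (hptv x hxF y hyF)
    _ = ENNReal.ofReal (dist x y ^ s) * ((g x + h x) + (g y + h y)) := by ring

theorem eN_abs_le_hajNorm {u : X → ℝ} :
    eN μ p (fun x => ENNReal.ofReal |u x|) ≤ hajNorm μ s p u :=
  self_le_add_right _ _

theorem hajNorm_le_of_grad {u : X → ℝ} {g : X → ℝ≥0∞} (hg : IsSGrad μ s u g) :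
    hajNorm μ s p u ≤ eN μ p (fun x => ENNReal.ofReal |u x|) + eN μ p g := by
  unfold hajNorm eN
  exact add_le_add_right (iInf₂_le g hg) _

theorem exists_grad_lt {u : X → ℝ} {C : ℝ≥0∞} (h : hajNorm μ s p u < C) :
    ∃ g : X → ℝ≥0∞, IsSGrad μ s u g ∧ eN μ p g < C := by
  have h2 : (⨅ (g : X → ℝ≥0∞) (_ : IsSGrad μ s u g),
      (∫⁻ x, g x ^ p ∂μ) ^ (1/p)) < C := lt_of_le_of_lt le_add_self h
  rw [iInf_lt_iff] at h2; obtain ⟨g, hg⟩ := h2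
  rw [iInf_lt_iff] at hg; obtain ⟨hsg, hlt⟩ := hg
  exact ⟨g, hsg, hlt⟩

theorem hajNorm_abs_le {u : X → ℝ} : hajNorm μ s p (fun x => |u x|) ≤ hajNorm μ s p u := by
  unfold hajNorm
  have h1 : (∫⁻ x, ENNReal.ofReal (abs (abs (u x))) ^ p ∂μ) ^ (1/p)
      = (∫⁻ x, ENNReal.ofReal |u x| ^ p ∂μ) ^ (1/p) := by
    congr 1; apply lintegral_congr; intro x; rw [abs_abs]
  rw [h1]
  apply add_le_add_right
  refine le_iInf fun g => le_iInf fun hg => ?_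
  exact iInf₂_le g hg.abs

theorem hCap_mono {E F : Set X} (h : E ⊆ F) : hCap μ s p E ≤ hCap μ s p F := by
  unfold hCap
  refine le_iInf fun u => le_iInf fun hu => le_iInf fun hU => ?_
  obtain ⟨U, hUo, hFU, h1⟩ := hU
  exact iInf_le_of_le u (iInf_le_of_le hu (iInf_le_of_le ⟨U, hUo, h.trans hFU, h1⟩ le_rfl))

theorem hCap_le_admissible {E : Set X} {u : X → ℝ} (hu : MemHaj μ s p u)
    (hU : ∃ U : Set X, IsOpen U ∧ E ⊆ U ∧ ∀ x ∈ U, 1 ≤ u x) :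
    hCap μ s p E ≤ hajNorm μ s p u ^ p :=
  iInf_le_of_le u (iInf_le_of_le hu (iInf_le_of_le hU le_rfl))

theorem exists_admissible_of_lt {E : Set X} {C : ℝ≥0∞} (h : hCap μ s p E < C) :
    ∃ u : X → ℝ, MemHaj μ s p u ∧ (∃ U, IsOpen U ∧ E ⊆ U ∧ ∀ x ∈ U, 1 ≤ u x) ∧
      hajNorm μ s p u ^ p < C := by
  unfold hCap at h
  rw [iInf_lt_iff] at h; obtain ⟨u, h⟩ := h
  rw [iInf_lt_iff] at h; obtain ⟨hu, h⟩ := h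
  rw [iInf_lt_iff] at h; obtain ⟨hU, h⟩ := h
  exact ⟨u, hu, hU, h⟩

theorem le_intMax_of_mem {𝓑 : X → Set (Set X)} {x : X} {B : Set X} (hB : B ∈ 𝓑 x)
    (hxB : x ∈ B) (f : X → ℝ) :
    (∫⁻ z in B, ENNReal.ofReal |f z| ∂μ) / μ B ≤ intMax μ 𝓑 f x := by
  unfold intMax
  exact le_iSup_of_le B (le_iSup_of_le ⟨x, hB⟩ (le_iSup_of_le hxB le_rfl))

theorem intMax_mono_ae {𝓑 : X → Set (Set X)} {f h : X → ℝ}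
    (hfh : ∀ᵐ z ∂μ, |f z| ≤ |h z|) (x : X) : intMax μ 𝓑 f x ≤ intMax μ 𝓑 h x := by
  unfold intMax
  refine iSup_mono fun B => iSup_mono fun _ => iSup_mono fun _ => ?_
  refine ENNReal.div_le_div_right (lintegral_mono_ae ?_) _
  exact ae_restrict_of_ae (hfh.mono fun z hz => ENNReal.ofReal_le_ofReal hz)

theorem intMax_const_mul {𝓑 : X → Set (Set X)} {f : X → ℝ} (hf : Measurable f) {c : ℝ}
    (hc : 0 ≤ c) (x : X) :
    intMax μ 𝓑 (fun z => c * f z) x = ENNReal.ofReal c * intMax μ 𝓑 f x := by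
  unfold intMax
  rw [ENNReal.mul_iSup]; apply iSup_congr; intro B
  rw [ENNReal.mul_iSup]; apply iSup_congr; intro h1
  rw [ENNReal.mul_iSup]; apply iSup_congr; intro h2
  have key : ∫⁻ z in B, ENNReal.ofReal |c * f z| ∂μ
      = ENNReal.ofReal c * ∫⁻ z in B, ENNReal.ofReal |f z| ∂μ := by
    rw [← lintegral_const_mul _ hf.abs.ennreal_ofReal]
    apply lintegral_congr; intro z
    rw [abs_mul, abs_of_nonneg hc, ENNReal.ofReal_mul hc]
  rw [key, div_eq_mul_inv, div_eq_mul_inv, mul_assoc]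

end Helpers2

section HSum

variable {X : Type*} [MetricSpace X] [MeasurableSpace X] {μ : Measure X} {s p : ℝ}

/-- Patched countable sum of absolute values of a sequence of functions. -/
noncomputable def hsum (a : ℕ → X → ℝ) (x : X) : ℝ :=
  if (∑' j, ENNReal.ofReal |a j x|) = ⊤ then 1 else (∑' j, ENNReal.ofReal |a j x|).toReal

theorem hsum_nonneg (a : ℕ → X → ℝ) (x : X) : 0 ≤ hsum a x := by
  unfold hsum; split_ifs
  · norm_num
  · exact ENNReal.toReal_nonneg

theorem hsum_measurable {a : ℕ → X → ℝ} (ha : ∀ j, Measurable (a j)) :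
    Measurable (hsum a) := by
  have hS : Measurable fun x => ∑' j, ENNReal.ofReal |a j x| :=
    Measurable.ennreal_tsum fun j => (ha j).abs.ennreal_ofReal
  unfold hsum
  exact Measurable.ite (hS (measurableSet_singleton ⊤)) measurable_const
    hS.ennreal_toReal

theorem hsum_ge_one (a : ℕ → X → ℝ) {j : ℕ} {x : X} (h1 : 1 ≤ a j x) : 1 ≤ hsum a x := by
  unfold hsum; split_ifs with h
  · exact le_refl 1
  · have h2 : (1 : ℝ≥0∞) ≤ ∑' j, ENNReal.ofReal |a j x| := by
      refine le_trans ?_ (ENNReal.le_tsum j)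
      rw [show (1:ℝ≥0∞) = ENNReal.ofReal 1 by simp]
      exact ENNReal.ofReal_le_ofReal (le_trans h1 (le_abs_self _))
    have := ENNReal.toReal_mono h h2
    simpa using this

theorem hsum_top_null {a : ℕ → X → ℝ} (hp : 1 ≤ p) (ha : ∀ j, Measurable (a j))
    (hfin : (∑' j, eN μ p (fun x => ENNReal.ofReal |a j x|)) ≠ ⊤) :
    μ {x | (∑' j, ENNReal.ofReal |a j x|) = ⊤} = 0 := by
  have hp0 : (0:ℝ) < p := lt_of_lt_of_le zero_lt_one hp
  have hS : Measurable fun x => ∑' j, ENNReal.ofReal |a j x| :=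
    Measurable.ennreal_tsum fun j => (ha j).abs.ennreal_ofReal
  have h1 : eN μ p (fun x => ∑' j, ENNReal.ofReal |a j x|) ≠ ⊤ :=
    ne_top_of_le_ne_top hfin (eN_tsum_le hp fun j => (ha j).abs.ennreal_ofReal)
  have h2 : (∫⁻ x, (∑' j, ENNReal.ofReal |a j x|) ^ p ∂μ) < ⊤ :=
    (eN_lt_top_iff hp0).1 (lt_top_iff_ne_top.2 h1)
  have h3 : ∀ᵐ x ∂μ, (∑' j, ENNReal.ofReal |a j x|) ^ p < ⊤ :=
    ae_lt_top (measurable_rpow_comp hS p) h2.ne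
  rw [ae_iff] at h3
  refine measure_mono_null (fun x hx => ?_) h3
  simp only [Set.mem_setOf_eq] at hx ⊢
  rw [hx, not_lt, ENNReal.top_rpow_of_pos hp0]

theorem hsum_ae_le {a : ℕ → X → ℝ} (hp : 1 ≤ p) (ha : ∀ j, Measurable (a j))
    (hfin : (∑' j, eN μ p (fun x => ENNReal.ofReal |a j x|)) ≠ ⊤) :
    ∀ᵐ x ∂μ, ∀ j, |a j x| ≤ hsum a x := by
  have h0 := hsum_top_null hp ha hfin
  rw [← compl_mem_ae_iff] at h0
  filter_upwards [h0] with x hx j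
  simp only [Set.mem_compl_iff, Set.mem_setOf_eq] at hx
  unfold hsum
  rw [if_neg hx]
  have h2 : ENNReal.ofReal |a j x| ≤ ∑' j, ENNReal.ofReal |a j x| := ENNReal.le_tsum j
  have := ENNReal.toReal_mono hx h2
  simpa [ENNReal.toReal_ofReal (abs_nonneg _)] using this

theorem hsum_eN_le {a : ℕ → X → ℝ} (hp : 1 ≤ p) (ha : ∀ j, Measurable (a j)) :
    eN μ p (fun x => ENNReal.ofReal |hsum a x|)
      ≤ ∑' j, eN μ p (fun x => ENNReal.ofReal |a j x|) := by
  have hp0 : (0:ℝ) < p := lt_of_lt_of_le zero_lt_one hp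
  refine le_trans (eN_mono hp0 (Filter.Eventually.of_forall fun x => ?_))
    (eN_tsum_le hp fun j => (ha j).abs.ennreal_ofReal)
  unfold hsum; split_ifs with h
  · exact le_top.trans_eq h.symm
  · rw [abs_of_nonneg ENNReal.toReal_nonneg]
    exact ENNReal.ofReal_toReal_le

theorem hsum_isSGrad {a : ℕ → X → ℝ} {g : ℕ → X → ℝ≥0∞} (hp : 1 ≤ p)
    (ha : ∀ j, Measurable (a j)) (hg : ∀ j, IsSGrad μ s (a j) (g j))
    (hfin : (∑' j, eN μ p (fun x => ENNReal.ofReal |a j x|)) ≠ ⊤) :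
    IsSGrad μ s (hsum a) (fun x => ∑' j, g j x) := by
  have hgm : Measurable fun x => ∑' j, g j x :=
    Measurable.ennreal_tsum fun j => (hg j).1
  choose E hE0 hEpt using fun j => (hg j).2
  refine ⟨hgm, {x | (∑' j, ENNReal.ofReal |a j x|) = ⊤} ∪ ⋃ j, E j,
    measure_union_null (hsum_top_null hp ha hfin) (measure_iUnion_null hE0),
    fun x hx y hy => ?_⟩
  have hxT : (∑' j, ENNReal.ofReal |a j x|) ≠ ⊤ := fun h' =>
    hx (Set.mem_union_left _ h')
  have hyT : (∑' j, ENNReal.ofReal |a j y|) ≠ ⊤ := fun h' =>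
    hy (Set.mem_union_left _ h')
  have hxE : ∀ j, x ∉ E j := fun j h' =>
    hx (Set.mem_union_right _ (Set.mem_iUnion.2 ⟨j, h'⟩))
  have hyE : ∀ j, y ∉ E j := fun j h' =>
    hy (Set.mem_union_right _ (Set.mem_iUnion.2 ⟨j, h'⟩))
  have hsx : Summable fun j => |a j x| := by
    have := ENNReal.summable_toReal hxT
    simpa [ENNReal.toReal_ofReal (abs_nonneg _)] using this
  have hsy : Summable fun j => |a j y| := by
    have := ENNReal.summable_toReal hyT
    simpa [ENNReal.toReal_ofReal (abs_nonneg _)] using this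
  have htx : hsum a x = ∑' j, |a j x| := by
    unfold hsum
    rw [if_neg (by exact hxT), ENNReal.tsum_toReal_eq fun j => ENNReal.ofReal_ne_top]
    simp [ENNReal.toReal_ofReal (abs_nonneg _)]
  have hty : hsum a y = ∑' j, |a j y| := by
    unfold hsum
    rw [if_neg (by exact hyT), ENNReal.tsum_toReal_eq fun j => ENNReal.ofReal_ne_top]
    simp [ENNReal.toReal_ofReal (abs_nonneg _)]
  have hsd : Summable fun j => |a j x - a j y| := by
    refine Summable.of_nonneg_of_le (fun j => abs_nonneg _) (fun j => abs_sub _ _)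
      (hsx.add hsy)
  have hsdd : Summable fun j => |(|a j x| - |a j y|)| := by
    refine Summable.of_nonneg_of_le (fun j => abs_nonneg _)
      (fun j => le_trans (abs_abs_sub_abs_le_abs_sub _ _) (abs_sub _ _)) (hsx.add hsy)
  have hreal : |hsum a x - hsum a y| ≤ ∑' j, |a j x - a j y| := by
    rw [htx, hty, ← hsx.tsum_sub hsy]
    calc |∑' j, (|a j x| - |a j y|)| ≤ ∑' j, |(|a j x| - |a j y|)| := by
          have := norm_tsum_le_tsum_norm (f := fun j => |a j x| - |a j y|) (by
            simpa [Real.norm_eq_abs] using hsdd)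
          simpa [Real.norm_eq_abs] using this
      _ ≤ ∑' j, |a j x - a j y| :=
          Summable.tsum_le_tsum (fun j => abs_abs_sub_abs_le_abs_sub _ _) hsdd hsd
  calc ENNReal.ofReal |hsum a x - hsum a y| ≤ ENNReal.ofReal (∑' j, |a j x - a j y|) :=
        ENNReal.ofReal_le_ofReal hreal
    _ = ∑' j, ENNReal.ofReal |a j x - a j y| :=
        ENNReal.ofReal_tsum_of_nonneg (fun j => abs_nonneg _) hsd
    _ ≤ ∑' j, ENNReal.ofReal (dist x y ^ s) * (g j x + g j y) :=
        ENNReal.tsum_le_tsum fun j => hEpt j x (hxE j) y (hyE j)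
    _ = ENNReal.ofReal (dist x y ^ s) * ((∑' j, g j x) + ∑' j, g j y) := by
        rw [ENNReal.tsum_mul_left, ENNReal.tsum_add]

end HSum

section Trunc

variable {X : Type*} [MetricSpace X] [MeasurableSpace X] {μ : Measure X} {s p : ℝ}

/-- Clamp to `[-k, k]`. -/
noncomputable def tclamp (k a : ℝ) : ℝ := max (min a k) (-k)

theorem tclamp_mono (k : ℝ) : Monotone (tclamp k) := fun x y hxy =>
  max_le_max (min_le_min hxy le_rfl) le_rfl

theorem tclamp_lip (k a b : ℝ) : |tclamp k a - tclamp k b| ≤ |a - b| := by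
  unfold tclamp
  refine le_trans (abs_max_sub_max_le_abs _ _ _) ?_
  refine le_trans (abs_min_sub_min_le_max _ _ _ _) ?_
  simp

theorem tres_eq_zero {k a : ℝ} (h : |a| ≤ k) : a - tclamp k a = 0 := by
  rw [abs_le] at h
  unfold tclamp
  rw [min_eq_left h.2, max_eq_left h.1]
  ring

theorem tres_abs_le {k a : ℝ} (hk : 0 ≤ k) : |a - tclamp k a| ≤ max (|a| - k) 0 := by
  unfold tclamp
  rcases le_total a k with h1 | h1
  · rcases le_total (-k) a with h2 | h2
    · rw [min_eq_left h1, max_eq_left h2]; simp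
    · rw [min_eq_left h1, max_eq_right h2]
      have ha : |a| = -a := abs_of_nonpos (by linarith)
      have h3 : |a - -k| = |a| - k := by
        rw [ha, abs_of_nonpos (by linarith)]; ring
      rw [h3]; exact le_max_left _ _
  · rw [min_eq_right h1, max_eq_left (by linarith)]
    have ha : |a| = a := abs_of_nonneg (by linarith)
    have h3 : |a - k| = |a| - k := by rw [ha, abs_of_nonneg (by linarith)]
    rw [h3]; exact le_max_left _ _

theorem tres_lip (k a b : ℝ) : |(a - tclamp k a) - (b - tclamp k b)| ≤ |a - b| := by
  rcases le_total a b with h | h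
  · have hm : tclamp k a ≤ tclamp k b := tclamp_mono k h
    have hd : tclamp k b - tclamp k a ≤ b - a := by
      have hl := tclamp_lip k b a
      rcases abs_cases (tclamp k b - tclamp k a) with ⟨he, _⟩ | ⟨he, _⟩ <;>
        rcases abs_cases (b - a) with ⟨hf, _⟩ | ⟨hf, _⟩ <;> linarith
    have habs : |a - b| = b - a := by rw [abs_sub_comm]; exact abs_of_nonneg (by linarith)
    rcases abs_cases ((a - tclamp k a) - (b - tclamp k b)) with ⟨he, _⟩ | ⟨he, _⟩ <;>
      rw [he] <;> linarith
  · have hm : tclamp k b ≤ tclamp k a := tclamp_mono k h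
    have hd : tclamp k a - tclamp k b ≤ a - b := by
      have hl := tclamp_lip k a b
      rcases abs_cases (tclamp k a - tclamp k b) with ⟨he, _⟩ | ⟨he, _⟩ <;>
        rcases abs_cases (a - b) with ⟨hf, _⟩ | ⟨hf, _⟩ <;> linarith
    have habs : |a - b| = a - b := abs_of_nonneg (by linarith)
    rcases abs_cases ((a - tclamp k a) - (b - tclamp k b)) with ⟨he, _⟩ | ⟨he, _⟩ <;>
      rw [he] <;> linarith

theorem abs_le_tres_add {k a : ℝ} (hk : 0 ≤ k) : |a| ≤ k + |a - tclamp k a| := by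
  have h1 : |tclamp k a| ≤ k := by
    unfold tclamp
    rw [abs_le]
    exact ⟨le_max_right _ _, max_le (min_le_right _ _) (by linarith)⟩
  calc |a| = |tclamp k a + (a - tclamp k a)| := by ring_nf
    _ ≤ |tclamp k a| + |a - tclamp k a| := abs_add_le _ _
    _ ≤ k + |a - tclamp k a| := by linarith

theorem ofReal_max_zero (r : ℝ) : ENNReal.ofReal (max r 0) = ENNReal.ofReal r := by
  rcases le_total r 0 with h | h
  · rw [max_eq_right h, ENNReal.ofReal_eq_zero.2 h, ENNReal.ofReal_zero]
  · rw [max_eq_left h]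

/-- The gradient of the truncation residue. -/
noncomputable def truncGrad (u : X → ℝ) (g : X → ℝ≥0∞) (k : ℕ) (x : X) : ℝ≥0∞ :=
  (if (k:ℝ)/2 < |u x| then 2 * g x else 0)
    + (if ENNReal.ofReal ((k:ℝ)/2) < g x then 2 * g x else 0)
    + ENNReal.ofReal (|u x| - k)

theorem truncGrad_measurable {u : X → ℝ} {g : X → ℝ≥0∞} (hu : Measurable u)
    (hg : Measurable g) (k : ℕ) : Measurable (truncGrad u g k) := by
  unfold truncGrad
  refine Measurable.add (Measurable.add ?_ ?_) ?_
  · exact Measurable.ite (measurableSet_lt measurable_const hu.abs)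
      (measurable_const.mul hg) measurable_const
  · exact Measurable.ite (measurableSet_lt measurable_const hg)
      (measurable_const.mul hg) measurable_const
  · exact (hu.abs.sub measurable_const).ennreal_ofReal

theorem truncGrad_le {u : X → ℝ} {g : X → ℝ≥0∞} (k : ℕ) (x : X) :
    truncGrad u g k x ≤ 4 * g x + ENNReal.ofReal |u x| := by
  have h4 : (4:ℝ≥0∞) * g x = 2 * g x + 2 * g x := by ring
  rw [h4]
  unfold truncGrad
  refine add_le_add (add_le_add ?_ ?_) ?_
  · split_ifs <;> simp
  · split_ifs <;> simp
  · exact ENNReal.ofReal_le_ofReal (by linarith [show (0:ℝ) ≤ (k:ℝ) from Nat.cast_nonneg k])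

theorem ofReal_tres_le {u : X → ℝ} (k : ℕ) (x : X) :
    ENNReal.ofReal |u x - tclamp k (u x)| ≤ ENNReal.ofReal (|u x| - k) := by
  rw [← ofReal_max_zero (|u x| - (k:ℝ))]
  exact ENNReal.ofReal_le_ofReal (tres_abs_le (Nat.cast_nonneg k))

theorem trunc_isSGrad {u : X → ℝ} {g : X → ℝ≥0∞} (hu : Measurable u)
    (hg : IsSGrad μ s u g) (k : ℕ) :
    IsSGrad μ s (fun x => u x - tclamp k (u x)) (truncGrad u g k) := by
  obtain ⟨hgm, E, hE0, hpt⟩ := hg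
  refine ⟨truncGrad_measurable hu hgm k, E, hE0, ?_⟩
  have hk0 : (0:ℝ) ≤ k := Nat.cast_nonneg k
  have hg2 : ∀ z, g z ≤ 2 * g z := fun z => le_mul_of_one_le_left zero_le one_le_two
  have hG1 : ∀ z, (k:ℝ)/2 < |u z| → g z ≤ truncGrad u g k z := by
    intro z hz
    unfold truncGrad
    rw [if_pos hz]
    exact le_add_right (le_add_right (hg2 z))
  have hG2 : ∀ z, ENNReal.ofReal ((k:ℝ)/2) < g z → g z ≤ truncGrad u g k z := by
    intro z hz
    unfold truncGrad
    rw [if_pos hz]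
    exact le_add_right ((hg2 z).trans (self_le_add_left _ _))
  have hG3 : ∀ z, ENNReal.ofReal (|u z| - k) ≤ truncGrad u g k z := by
    intro z
    unfold truncGrad
    exact self_le_add_left _ _
  -- symmetric reduction
  suffices key : ∀ x ∉ E, ∀ y ∉ E, dist x y ^ s < 1 → |u y| ≤ |u x| →
      ENNReal.ofReal |(u x - tclamp k (u x)) - (u y - tclamp k (u y))| ≤
        ENNReal.ofReal (dist x y ^ s) * (truncGrad u g k x + truncGrad u g k y) by
    intro x hx y hy
    rcases le_or_gt 1 (dist x y ^ s) with hD | hD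
    · -- large distance : use third components
      calc ENNReal.ofReal |(u x - tclamp k (u x)) - (u y - tclamp k (u y))|
          ≤ ENNReal.ofReal (|u x - tclamp k (u x)| + |u y - tclamp k (u y)|) :=
            ENNReal.ofReal_le_ofReal (abs_sub _ _)
        _ = ENNReal.ofReal |u x - tclamp k (u x)| + ENNReal.ofReal |u y - tclamp k (u y)| :=
            ENNReal.ofReal_add (abs_nonneg _) (abs_nonneg _)
        _ ≤ truncGrad u g k x + truncGrad u g k y :=
            add_le_add ((ofReal_tres_le k x).trans (hG3 x))
              ((ofReal_tres_le k y).trans (hG3 y))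
        _ ≤ ENNReal.ofReal (dist x y ^ s) * (truncGrad u g k x + truncGrad u g k y) :=
            le_mul_of_one_le_left zero_le (by
              rw [show (1:ℝ≥0∞) = ENNReal.ofReal 1 by simp]
              exact ENNReal.ofReal_le_ofReal hD)
    · rcases le_total (|u y|) (|u x|) with hc | hc
      · exact key x hx y hy hD hc
      · have := key y hy x hx (by rwa [dist_comm]) hc
        rwa [abs_sub_comm, dist_comm, add_comm] at this
  intro x hx y hy hD hyx
  have hDle : ENNReal.ofReal (dist x y ^ s) ≤ 1 := by
    rw [show (1:ℝ≥0∞) = ENNReal.ofReal 1 by simp]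
    exact ENNReal.ofReal_le_ofReal hD.le
  by_cases h1 : |u x| ≤ k
  · have h2 : |u y| ≤ k := le_trans hyx h1
    rw [tres_eq_zero h1, tres_eq_zero h2]
    simp
  · push_neg at h1
    have hx1 : (k:ℝ)/2 < |u x| := by linarith
    have hbase : ENNReal.ofReal |u x - u y| ≤
        ENNReal.ofReal (dist x y ^ s) * (g x + g y) := hpt x hx y hy
    have hlip : ENNReal.ofReal |(u x - tclamp k (u x)) - (u y - tclamp k (u y))| ≤
        ENNReal.ofReal |u x - u y| := ENNReal.ofReal_le_ofReal (tres_lip _ _ _)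
    by_cases h2 : (k:ℝ)/2 < |u y|
    · refine le_trans (hlip.trans hbase) ?_
      exact mul_le_mul_right (add_le_add (hG1 x hx1) (hG1 y h2)) _
    · push_neg at h2
      by_cases h3 : ENNReal.ofReal ((k:ℝ)/2) < g y
      · refine le_trans (hlip.trans hbase) ?_
        exact mul_le_mul_right (add_le_add (hG1 x hx1) (hG2 y h3)) _
      · push_neg at h3
        -- the delicate case
        have hwy : u y - tclamp k (u y) = 0 := tres_eq_zero (by linarith)
        have hkey : ENNReal.ofReal (|u x| - k) ≤
            ENNReal.ofReal (dist x y ^ s) * g x := by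
          have hsum : ENNReal.ofReal (|u x| - k) + ENNReal.ofReal ((k:ℝ)/2)
              ≤ ENNReal.ofReal (dist x y ^ s) * g x + ENNReal.ofReal ((k:ℝ)/2) := by
            calc ENNReal.ofReal (|u x| - k) + ENNReal.ofReal ((k:ℝ)/2)
                = ENNReal.ofReal (|u x| - (k:ℝ)/2) := by
                  rw [← ENNReal.ofReal_add (by linarith) (by linarith)]
                  congr 1; ring
              _ ≤ ENNReal.ofReal |u x - u y| := by
                  refine ENNReal.ofReal_le_ofReal ?_
                  have := abs_sub_abs_le_abs_sub (u x) (u y)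
                  linarith
              _ ≤ ENNReal.ofReal (dist x y ^ s) * (g x + g y) := hbase
              _ = ENNReal.ofReal (dist x y ^ s) * g x +
                  ENNReal.ofReal (dist x y ^ s) * g y := by ring
              _ ≤ ENNReal.ofReal (dist x y ^ s) * g x + ENNReal.ofReal ((k:ℝ)/2) := by
                  refine add_le_add_right (le_trans (mul_le_of_le_one_left zero_le hDle) h3) _
          exact ENNReal.le_of_add_le_add_right ENNReal.ofReal_ne_top hsum
        calc ENNReal.ofReal |(u x - tclamp k (u x)) - (u y - tclamp k (u y))|
            = ENNReal.ofReal |u x - tclamp k (u x)| := by rw [hwy, sub_zero]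
          _ ≤ ENNReal.ofReal (|u x| - k) := ofReal_tres_le k x
          _ ≤ ENNReal.ofReal (dist x y ^ s) * g x := hkey
          _ ≤ ENNReal.ofReal (dist x y ^ s) * (truncGrad u g k x + truncGrad u g k y) :=
              mul_le_mul_right (le_add_right (hG1 x hx1)) _

end Trunc

section TruncPackage

variable {X : Type*} [MetricSpace X] [MeasurableSpace X] {μ : Measure X} {s p : ℝ}

theorem trunc_package (hp : 1 < p) {u : X → ℝ} (hu : MemHaj μ s p u) :
    ∃ w : ℕ → X → ℝ, (∀ k, Measurable (w k)) ∧ (∀ k, MemHaj μ s p (w k)) ∧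
      Tendsto (fun k => hajNorm μ s p (w k)) atTop (𝓝 0) ∧
      (∀ (k : ℕ) (x : X), |u x| ≤ k + |w k x|) := by
  have hp1 : 1 ≤ p := hp.le
  have hp0 : (0:ℝ) < p := lt_trans zero_lt_one hp
  obtain ⟨hum, hufin⟩ := hu
  obtain ⟨g, hgrad, hgN⟩ := exists_grad_lt
    (ENNReal.lt_add_right hufin.ne one_ne_zero)
  have hgm : Measurable g := hgrad.1
  have hgT' : eN μ p g < ⊤ :=
    lt_trans hgN (ENNReal.add_lt_top.2 ⟨lt_top_iff_ne_top.2 hufin.ne, ENNReal.one_lt_top⟩)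
  have hgint : (∫⁻ x, g x ^ p ∂μ) < ⊤ := (eN_lt_top_iff hp0).1 hgT'
  have hgae : ∀ᵐ x ∂μ, g x < ⊤ := by
    filter_upwards [ae_lt_top (measurable_rpow_comp hgm p) hgint.ne] with x hx
    by_contra hc
    rw [not_lt, top_le_iff] at hc
    rw [hc, ENNReal.top_rpow_of_pos hp0] at hx
    exact (lt_irrefl _ hx).elim
  have huNle : eN μ p (fun x => ENNReal.ofReal |u x|) ≤ hajNorm μ s p u :=
    eN_abs_le_hajNorm
  have huint : (∫⁻ x, ENNReal.ofReal |u x| ^ p ∂μ) < ⊤ :=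
    (eN_lt_top_iff hp0).1 (lt_of_le_of_lt huNle hufin)
  set w : ℕ → X → ℝ := fun k x => u x - tclamp k (u x) with hw
  have hwm : ∀ k, Measurable (w k) := fun k =>
    hum.sub ((hum.min measurable_const).max measurable_const)
  have hwgrad : ∀ k, IsSGrad μ s (w k) (truncGrad u g k) := fun k =>
    trunc_isSGrad hum hgrad k
  have hwle : ∀ k x, ENNReal.ofReal |w k x| ≤ ENNReal.ofReal |u x| := by
    intro k x
    refine ENNReal.ofReal_le_ofReal (le_trans (tres_abs_le (Nat.cast_nonneg k)) ?_)
    refine max_le (by linarith [show (0:ℝ) ≤ (k:ℝ) from Nat.cast_nonneg k]) (abs_nonneg _)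
  -- dominating function for the gradients
  have hBN : eN μ p (fun x => 4 * g x + ENNReal.ofReal |u x|) < ⊤ := by
    refine lt_of_le_of_lt (eN_add_le hp1 ((measurable_const.mul hgm).aemeasurable)
      (hum.abs.ennreal_ofReal.aemeasurable)) ?_
    rw [eN_const_mul hp0 hgm (by norm_num : (4:ℝ≥0∞) ≠ ⊤)]
    exact ENNReal.add_lt_top.2 ⟨ENNReal.mul_lt_top (by norm_num) hgT',
      lt_of_le_of_lt huNle hufin⟩
  have hBint : (∫⁻ x, (4 * g x + ENNReal.ofReal |u x|) ^ p ∂μ) < ⊤ :=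
    (eN_lt_top_iff hp0).1 hBN
  have hwNle : ∀ k, eN μ p (fun x => ENNReal.ofReal |w k x|)
      ≤ eN μ p (fun x => ENNReal.ofReal |u x|) := fun k =>
    eN_mono hp0 (Filter.Eventually.of_forall fun x => hwle k x)
  have hGNle : ∀ k, eN μ p (truncGrad u g k)
      ≤ eN μ p (fun x => 4 * g x + ENNReal.ofReal |u x|) := fun k =>
    eN_mono hp0 (Filter.Eventually.of_forall fun x => truncGrad_le k x)
  have hmem : ∀ k, MemHaj μ s p (w k) := by
    intro k
    refine ⟨hwm k, lt_of_le_of_lt (hajNorm_le_of_grad (hwgrad k)) ?_⟩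
    exact ENNReal.add_lt_top.2 ⟨lt_of_le_of_lt (hwNle k) (lt_of_le_of_lt huNle hufin),
      lt_of_le_of_lt (hGNle k) hBN⟩
  -- first dominated convergence
  have hDCT1 : Tendsto (fun k => ∫⁻ x, ENNReal.ofReal |w k x| ^ p ∂μ) atTop (𝓝 0) := by
    have h0 : (0:ℝ≥0∞) = ∫⁻ _ : X, (0:ℝ≥0∞) ∂μ := by simp
    rw [h0]
    refine tendsto_lintegral_of_dominated_convergence _
      (fun k => measurable_rpow_comp (hwm k).abs.ennreal_ofReal p)
      (fun k => Filter.Eventually.of_forall fun x =>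
        ENNReal.rpow_le_rpow (hwle k x) hp0.le) huint.ne
      (Filter.Eventually.of_forall fun x => ?_)
    refine Tendsto.congr' ?_ tendsto_const_nhds
    filter_upwards [Filter.eventually_ge_atTop ⌈|u x|⌉₊] with k hk
    have h1 : |u x| ≤ (k:ℝ) := le_trans (Nat.le_ceil _) (Nat.cast_le.2 hk)
    show (0:ℝ≥0∞) = ENNReal.ofReal |w k x| ^ p
    rw [show w k x = 0 from tres_eq_zero h1]
    simp [ENNReal.zero_rpow_of_pos hp0]
  -- second dominated convergence
  have hDCT2 : Tendsto (fun k => ∫⁻ x, truncGrad u g k x ^ p ∂μ) atTop (𝓝 0) := by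
    have h0 : (0:ℝ≥0∞) = ∫⁻ _ : X, (0:ℝ≥0∞) ∂μ := by simp
    rw [h0]
    refine tendsto_lintegral_of_dominated_convergence _
      (fun k => measurable_rpow_comp (truncGrad_measurable hum hgm k) p)
      (fun k => Filter.Eventually.of_forall fun x =>
        ENNReal.rpow_le_rpow (truncGrad_le k x) hp0.le) hBint.ne ?_
    filter_upwards [hgae] with x hx
    refine Tendsto.congr' ?_ tendsto_const_nhds
    filter_upwards [Filter.eventually_ge_atTop
      (max ⌈2*|u x|⌉₊ ⌈2 * (g x).toReal⌉₊)] with k hk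
    have hk1 : (⌈2*|u x|⌉₊ : ℝ) ≤ k := Nat.cast_le.2 (le_trans (le_max_left _ _) hk)
    have hk2 : (⌈2*(g x).toReal⌉₊ : ℝ) ≤ k := Nat.cast_le.2 (le_trans (le_max_right _ _) hk)
    have h1 : ¬((k:ℝ)/2 < |u x|) := by
      have := Nat.le_ceil (2*|u x|); push_neg; linarith
    have h2 : ¬(ENNReal.ofReal ((k:ℝ)/2) < g x) := by
      push_neg
      have h3 : (g x).toReal ≤ (k:ℝ)/2 := by
        have := Nat.le_ceil (2*(g x).toReal); linarith
      calc g x = ENNReal.ofReal (g x).toReal := (ENNReal.ofReal_toReal hx.ne).symm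
        _ ≤ ENNReal.ofReal ((k:ℝ)/2) := ENNReal.ofReal_le_ofReal h3
    have h3 : ENNReal.ofReal (|u x| - (k:ℝ)) = 0 := by
      rw [ENNReal.ofReal_eq_zero]
      have := Nat.le_ceil (2*|u x|)
      have hk0 : (0:ℝ) ≤ (k:ℝ) := Nat.cast_nonneg k
      nlinarith [abs_nonneg (u x)]
    show (0:ℝ≥0∞) = truncGrad u g k x ^ p
    unfold truncGrad
    rw [if_neg h1, if_neg h2, h3]
    simp [ENNReal.zero_rpow_of_pos hp0]
  -- assemble
  have hcont : Continuous fun z : ℝ≥0∞ => z ^ (1/p) := ENNReal.continuous_rpow_const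
  have hz : ((0:ℝ≥0∞)) ^ (1/p) = 0 := ENNReal.zero_rpow_of_pos (by positivity)
  have t1 : Tendsto (fun k => eN μ p (fun x => ENNReal.ofReal |w k x|)) atTop (𝓝 0) := by
    have := (hcont.tendsto 0).comp hDCT1
    rw [hz] at this
    exact this
  have t2 : Tendsto (fun k => eN μ p (truncGrad u g k)) atTop (𝓝 0) := by
    have := (hcont.tendsto 0).comp hDCT2
    rw [hz] at this
    exact this
  refine ⟨w, hwm, hmem, ?_, fun k x => abs_le_tres_add (Nat.cast_nonneg k)⟩
  have hsq := t1.add t2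
  rw [add_zero] at hsq
  exact tendsto_of_tendsto_of_tendsto_of_le_of_le tendsto_const_nhds hsq
    (fun k => zero_le) (fun k => hajNorm_le_of_grad (hwgrad k))

theorem tsum_half_pow : ∑' j : ℕ, ((2:ℝ≥0∞)⁻¹)^j = 2 := by
  rw [ENNReal.tsum_geometric, ENNReal.one_sub_inv_two, inv_inv]

end TruncPackage

section PartA

variable {X : Type*} [MetricSpace X] [MeasurableSpace X]

theorem partA (μ : Measure X) (𝓑 : X → Set (Set X)) (s p : ℝ) (hp : 1 < p)
    (H1 : ∀ u : X → ℝ, MemHaj μ s p u →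
      Tendsto (fun lam : ℝ => hCap μ s p {x | ENNReal.ofReal lam < intMax μ 𝓑 u x})
        atTop (𝓝 0)) :
    ∀ lam : ℝ, 0 < lam → ∀ uk : ℕ → X → ℝ, (∀ k, MemHaj μ s p (uk k)) →
      Tendsto (fun k => hajNorm μ s p (uk k)) atTop (𝓝 0) →
      Tendsto (fun k => hCap μ s p {x | ENNReal.ofReal lam < intMax μ 𝓑 (uk k) x})
        atTop (𝓝 0) := by
  have hp1 : 1 ≤ p := hp.le
  have hp0 : (0:ℝ) < p := lt_trans zero_lt_one hp
  intro lam hlam uk hukmem huknorm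
  by_contra hcon
  rw [ENNReal.tendsto_nhds_zero] at hcon
  push_neg at hcon
  obtain ⟨ε0, hε0, hfreq⟩ := hcon
  have hfreq' : ∃ᶠ k in atTop,
      ε0 < hCap μ s p {x | ENNReal.ofReal lam < intMax μ 𝓑 (uk k) x} := by
    refine hfreq.mono fun k hk => ?_
    exact hk
  set c : ℕ → ℝ≥0∞ := fun j => (2:ℝ≥0∞)⁻¹ ^ j * (ENNReal.ofReal ((j:ℝ)+1))⁻¹ with hc
  have hcpos : ∀ j, 0 < c j := by
    intro j
    refine ENNReal.mul_pos ?_ ?_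
    · exact (ENNReal.pow_pos (by norm_num) j).ne'
    · exact ENNReal.inv_ne_zero.2 ENNReal.ofReal_ne_top
  have hcancel : ∀ j : ℕ, ENNReal.ofReal ((j:ℝ)+1) * c j = (2:ℝ≥0∞)⁻¹ ^ j := by
    intro j
    have hne0 : ENNReal.ofReal ((j:ℝ)+1) ≠ 0 := by
      simp [ENNReal.ofReal_eq_zero]; positivity
    show ENNReal.ofReal ((j:ℝ)+1) * ((2:ℝ≥0∞)⁻¹ ^ j * (ENNReal.ofReal ((j:ℝ)+1))⁻¹)
      = (2:ℝ≥0∞)⁻¹ ^ j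
    rw [mul_comm ((2:ℝ≥0∞)⁻¹ ^ j) _, ← mul_assoc,
      ENNReal.mul_inv_cancel hne0 ENNReal.ofReal_ne_top, one_mul]
  have hev : ∀ j, ∀ᶠ k in atTop, hajNorm μ s p (uk k) < c j := fun j =>
    huknorm.eventually_lt_const (hcpos j)
  have hsel : ∀ j : ℕ, ∃ k,
      ε0 < hCap μ s p {x | ENNReal.ofReal lam < intMax μ 𝓑 (uk k) x} ∧
      hajNorm μ s p (uk k) < c j := fun j => ((hfreq'.and_eventually (hev j)).exists)
  choose K hK1 hK2 using hsel
  set a : ℕ → X → ℝ := fun j x => ((j:ℝ)+1) * uk (K j) x with ha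
  have hexg : ∀ j, ∃ g, IsSGrad μ s (uk (K j)) g ∧ eN μ p g < c j := fun j =>
    exists_grad_lt (hK2 j)
  choose g0 hg0 hg0N using hexg
  set g : ℕ → X → ℝ≥0∞ := fun j x => ENNReal.ofReal |(j:ℝ)+1| * g0 j x with hg
  have hga : ∀ j, IsSGrad μ s (a j) (g j) := fun j => (hg0 j).const_mul _
  have hmeasa : ∀ j, Measurable (a j) := fun j => measurable_const.mul (hukmem (K j)).1
  have habs : ∀ j : ℕ, |(j:ℝ)+1| = (j:ℝ)+1 := fun j => abs_of_nonneg (by positivity)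
  have haN : ∀ j, eN μ p (fun x => ENNReal.ofReal |a j x|) ≤ (2:ℝ≥0∞)⁻¹ ^ j := by
    intro j
    have heq : (fun x => ENNReal.ofReal |a j x|)
        = fun x => ENNReal.ofReal ((j:ℝ)+1) * ENNReal.ofReal |uk (K j) x| := by
      funext x
      rw [ha]
      simp only
      rw [abs_mul, habs j, ENNReal.ofReal_mul (by positivity)]
    rw [heq, eN_const_mul hp0 (hukmem (K j)).1.abs.ennreal_ofReal ENNReal.ofReal_ne_top]
    rw [← hcancel j]
    exact mul_le_mul_right (le_trans eN_abs_le_hajNorm (hK2 j).le) _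
  have hgN : ∀ j, eN μ p (g j) ≤ (2:ℝ≥0∞)⁻¹ ^ j := by
    intro j
    rw [hg]
    simp only
    rw [eN_const_mul hp0 (hg0 j).1 ENNReal.ofReal_ne_top, habs j, ← hcancel j]
    exact mul_le_mul_right (hg0N j).le _
  have hfinA : (∑' j, eN μ p (fun x => ENNReal.ofReal |a j x|)) ≠ ⊤ := by
    refine ne_top_of_le_ne_top ?_ (ENNReal.tsum_le_tsum haN)
    rw [tsum_half_pow]
    norm_num
  have hfinG : (∑' j, eN μ p (g j)) ≤ 2 := by
    refine le_trans (ENNReal.tsum_le_tsum hgN) ?_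
    rw [tsum_half_pow]
  set U := hsum a with hU
  have hUmem : MemHaj μ s p U := by
    refine ⟨hsum_measurable hmeasa, ?_⟩
    refine lt_of_le_of_lt (hajNorm_le_of_grad (hsum_isSGrad hp1 hmeasa hga hfinA)) ?_
    refine ENNReal.add_lt_top.2 ⟨?_, ?_⟩
    · refine lt_of_le_of_lt (hsum_eN_le hp1 hmeasa) ?_
      refine lt_of_le_of_lt (ENNReal.tsum_le_tsum haN) ?_
      rw [tsum_half_pow]; exact (by norm_num)
    · refine lt_of_le_of_lt (eN_tsum_le hp1 fun j => (hga j).1) ?_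
      exact lt_of_le_of_lt hfinG (by norm_num)
  have hdom : ∀ j, ∀ᵐ z ∂μ, |a j z| ≤ |U z| := by
    intro j
    filter_upwards [hsum_ae_le hp1 hmeasa hfinA] with z hz
    rw [abs_of_nonneg (hsum_nonneg a z)]
    exact hz j
  have hsubset : ∀ j, {x | ENNReal.ofReal lam < intMax μ 𝓑 (uk (K j)) x}
      ⊆ {x | ENNReal.ofReal (((j:ℝ)+1)*lam) < intMax μ 𝓑 U x} := by
    intro j x hx
    simp only [Set.mem_setOf_eq] at hx ⊢
    have h1 : intMax μ 𝓑 (a j) x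
        = ENNReal.ofReal ((j:ℝ)+1) * intMax μ 𝓑 (uk (K j)) x :=
      intMax_const_mul (hukmem (K j)).1 (by positivity) x
    have hne0 : ENNReal.ofReal ((j:ℝ)+1) ≠ 0 := by
      simp [ENNReal.ofReal_eq_zero]; positivity
    calc ENNReal.ofReal (((j:ℝ)+1)*lam)
        = ENNReal.ofReal ((j:ℝ)+1) * ENNReal.ofReal lam := by
          rw [ENNReal.ofReal_mul (by positivity)]
      _ < ENNReal.ofReal ((j:ℝ)+1) * intMax μ 𝓑 (uk (K j)) x := by
          refine ENNReal.mul_lt_mul_right hne0 ENNReal.ofReal_ne_top ?_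
          exact hx
      _ = intMax μ 𝓑 (a j) x := h1.symm
      _ ≤ intMax μ 𝓑 U x := intMax_mono_ae (hdom j) x
  have hcomp : Tendsto (fun j : ℕ => ((j:ℝ)+1)*lam) atTop atTop := by
    refine Filter.Tendsto.atTop_mul_const hlam ?_
    exact Filter.tendsto_atTop_add_const_right _ _ tendsto_natCast_atTop_atTop
  have htend : Tendsto (fun j : ℕ =>
      hCap μ s p {x | ENNReal.ofReal (((j:ℝ)+1)*lam) < intMax μ 𝓑 U x})
      atTop (𝓝 0) := (H1 U hUmem).comp hcomp
  have hlow : ∀ j : ℕ, ε0 < hCap μ s p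
      {x | ENNReal.ofReal (((j:ℝ)+1)*lam) < intMax μ 𝓑 U x} := fun j =>
    lt_of_lt_of_le (hK1 j) (hCap_mono (hsubset j))
  obtain ⟨j, hj⟩ := (htend.eventually_lt_const hε0).exists
  exact absurd (hlow j) (not_lt.2 hj.le)

end PartA

section UnionCap

variable {X : Type*} [MetricSpace X] [MeasurableSpace X] {μ : Measure X} {s p : ℝ}

theorem rpow_lt_of_rpow_lt {a b : ℝ≥0∞} (hp0 : 0 < p) (h : a ^ p < b ^ p) : a < b := by
  by_contra hc
  rw [not_lt] at hc
  exact absurd ((ENNReal.rpow_le_rpow_iff hp0).2 hc) (not_le.2 h)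

theorem hCap_iUnion_le (hp : 1 < p) {T : ℕ → Set X} {φ : ℕ → X → ℝ} {V : ℕ → Set X}
    (hmem : ∀ n, MemHaj μ s p (φ n)) (hV : ∀ n, IsOpen (V n)) (hTV : ∀ n, T n ⊆ V n)
    (hφ1 : ∀ n, ∀ x ∈ V n, 1 ≤ φ n x) {b : ℕ → ℝ≥0∞}
    (hb : ∀ n, hajNorm μ s p (φ n) < b n) (hbfin : (∑' n, b n) ≠ ⊤) :
    hCap μ s p (⋃ n, T n) ≤ (2 * ∑' n, b n) ^ p := by
  have hp1 : 1 ≤ p := hp.le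
  have hexg : ∀ n, ∃ g, IsSGrad μ s (φ n) g ∧ eN μ p g < b n := fun n =>
    exists_grad_lt (hb n)
  choose g hg hgN using hexg
  have hmeasφ : ∀ n, Measurable (φ n) := fun n => (hmem n).1
  have hφN : ∀ n, eN μ p (fun x => ENNReal.ofReal |φ n x|) ≤ b n := fun n =>
    le_trans eN_abs_le_hajNorm (hb n).le
  have hfinA : (∑' n, eN μ p (fun x => ENNReal.ofReal |φ n x|)) ≠ ⊤ :=
    ne_top_of_le_ne_top hbfin (ENNReal.tsum_le_tsum hφN)
  have hΦnorm : hajNorm μ s p (hsum φ) ≤ 2 * ∑' n, b n := by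
    refine le_trans (hajNorm_le_of_grad (hsum_isSGrad hp1 hmeasφ hg hfinA)) ?_
    have h1 := (hsum_eN_le (μ := μ) hp1 hmeasφ).trans (ENNReal.tsum_le_tsum hφN)
    have h2 := (eN_tsum_le (μ := μ) hp1 fun n => (hg n).1).trans
      (ENNReal.tsum_le_tsum fun n => (hgN n).le)
    calc eN μ p (fun x => ENNReal.ofReal |hsum φ x|) + eN μ p (fun x => ∑' n, g n x)
        ≤ (∑' n, b n) + (∑' n, b n) := add_le_add h1 h2
      _ = 2 * ∑' n, b n := (two_mul _).symm
  have hΦmem : MemHaj μ s p (hsum φ) := by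
    refine ⟨hsum_measurable hmeasφ, lt_of_le_of_lt hΦnorm ?_⟩
    exact ENNReal.mul_lt_top (by norm_num) (lt_top_iff_ne_top.2 hbfin)
  refine le_trans (hCap_le_admissible hΦmem ⟨⋃ n, V n, isOpen_iUnion hV,
    Set.iUnion_mono hTV, ?_⟩) (ENNReal.rpow_le_rpow hΦnorm (by positivity))
  intro x hx
  obtain ⟨n, hn⟩ := Set.mem_iUnion.1 hx
  exact hsum_ge_one φ (hφ1 n x hn)

end UnionCap

section PartB

variable {X : Type*} [MetricSpace X] [MeasurableSpace X]

theorem partB (μ : Measure X)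
    (hball : ∀ (x : X) (r : ℝ), 0 < r → 0 < μ (ball x r) ∧ μ (ball x r) < ⊤)
    (𝓑 : X → Set (Set X)) (h𝓑 : IsBFBasis μ 𝓑) (s p : ℝ) (hp : 1 < p)
    (hloc : ∀ u : X → ℝ, MemHaj μ s p u → LocallyIntegrable u μ)
    (H2 : ∀ lam : ℝ, 0 < lam → ∀ uk : ℕ → X → ℝ, (∀ k, MemHaj μ s p (uk k)) →
      Tendsto (fun k => hajNorm μ s p (uk k)) atTop (𝓝 0) →
      Tendsto (fun k => hCap μ s p {x | ENNReal.ofReal lam < intMax μ 𝓑 (uk k) x})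
        atTop (𝓝 0))
    (u : X → ℝ) (hu : MemHaj μ s p u) (hqc : QuasiCont μ s p u) :
    ∃ E : Set X, hCap μ s p E = 0 ∧ ∀ x ∉ E,
      BasisLim 𝓑 x (fun B => ⨍ z in B, u z ∂μ) (u x) := by
  have hp1 : 1 ≤ p := hp.le
  have hp0 : (0:ℝ) < p := lt_trans zero_lt_one hp
  -- truncation sequence
  obtain ⟨w, hwm, hwmem, hwnorm, hwbound⟩ := trunc_package hp hu
  -- quasicontinuity sequence
  have hseq : ∀ n : ℕ, ∃ (v : X → ℝ) (U : Set X), MemHaj μ s p v ∧ (∀ x, 0 ≤ v x) ∧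
      IsOpen U ∧ (∀ x ∈ U, 1 ≤ v x) ∧ hajNorm μ s p v < (2:ℝ≥0∞)⁻¹ ^ n ∧
      ContinuousOn u Uᶜ := by
    intro n
    have hbase_ne : ((2:ℝ≥0∞)⁻¹ ^ n) ≠ ⊤ := by
      exact ENNReal.pow_ne_top (by norm_num)
    have hbase_pos : (0:ℝ≥0∞) < (2:ℝ≥0∞)⁻¹ ^ n := ENNReal.pow_pos (by norm_num) n
    have hpow_ne_top : ((2:ℝ≥0∞)⁻¹ ^ n) ^ p ≠ ⊤ :=
      ENNReal.rpow_ne_top_of_nonneg hp0.le hbase_ne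
    have hpow_pos : (0:ℝ≥0∞) < ((2:ℝ≥0∞)⁻¹ ^ n) ^ p :=
      ENNReal.rpow_pos hbase_pos hbase_ne
    have hεr : 0 < (((2:ℝ≥0∞)⁻¹ ^ n) ^ p).toReal :=
      ENNReal.toReal_pos hpow_pos.ne' hpow_ne_top
    obtain ⟨F, hF, hcontF⟩ := hqc _ hεr
    rw [ENNReal.ofReal_toReal hpow_ne_top] at hF
    obtain ⟨φ, hφmem, ⟨U, hUo, hFU, hφ1⟩, hφN⟩ := exists_admissible_of_lt hF
    have hφN' : hajNorm μ s p φ < (2:ℝ≥0∞)⁻¹ ^ n := rpow_lt_of_rpow_lt hp0 hφN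
    refine ⟨fun x => |φ x|, U, ⟨hφmem.1.abs, hajNorm_abs_le.trans_lt hφmem.2⟩,
      fun x => abs_nonneg _, hUo, fun x hx => (hφ1 x hx).trans (le_abs_self _),
      hajNorm_abs_le.trans_lt hφN', hcontF.mono (Set.compl_subset_compl.2 hFU)⟩
  choose v U hvmem hv0 hUo hv1 hvN hcont using hseq
  -- norm convergence
  have hhalf : Tendsto (fun n : ℕ => (2:ℝ≥0∞)⁻¹ ^ n) atTop (𝓝 0) :=
    ENNReal.tendsto_pow_atTop_nhds_zero_of_lt_one (by norm_num)
  have hvnorm : Tendsto (fun n => hajNorm μ s p (v n)) atTop (𝓝 0) :=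
    tendsto_of_tendsto_of_tendsto_of_le_of_le tendsto_const_nhds hhalf
      (fun n => zero_le) (fun n => (hvN n).le)
  -- capacity convergence from H2
  have hvcap : ∀ q : ℕ, Tendsto (fun i => hCap μ s p
      {x | ENNReal.ofReal (1/((q:ℝ)+1)) < intMax μ 𝓑 (v i) x}) atTop (𝓝 0) :=
    fun q => H2 _ (by positivity) v hvmem hvnorm
  have hwcap : ∀ q : ℕ, Tendsto (fun k => hCap μ s p
      {x | ENNReal.ofReal (1/((q:ℝ)+1)) < intMax μ 𝓑 (w k) x}) atTop (𝓝 0) :=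
    fun q => H2 _ (by positivity) w hwmem hwnorm
  -- positive thresholds
  have hthr_pos : ∀ q m : ℕ, (0:ℝ≥0∞) < ((2:ℝ≥0∞)⁻¹ ^ (3*q+2+m)) ^ p := fun q m =>
    ENNReal.rpow_pos (ENNReal.pow_pos (by norm_num) _) (ENNReal.pow_ne_top (by norm_num))
  -- selections
  have hselA : ∀ q m : ℕ, ∃ a, 3*q+2+m ≤ a ∧
      hCap μ s p {x | ENNReal.ofReal (1/((q:ℝ)+1)) < intMax μ 𝓑 (v a) x}
        < ((2:ℝ≥0∞)⁻¹ ^ (3*q+2+m)) ^ p := by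
    intro q m
    obtain ⟨a, ha1, ha2⟩ := ((Filter.eventually_ge_atTop (3*q+2+m)).and
      ((hvcap q).eventually_lt_const (hthr_pos q m))).exists
    exact ⟨a, ha1, ha2⟩
  choose A hA1 hA2 using hselA
  have hselK : ∀ q m : ℕ, ∃ k,
      hCap μ s p {x | ENNReal.ofReal (1/((q:ℝ)+1)) < intMax μ 𝓑 (w k) x}
        < ((2:ℝ≥0∞)⁻¹ ^ (3*q+2+m)) ^ p := fun q m =>
    ((hwcap q).eventually_lt_const (hthr_pos q m)).exists
  choose K hK2 using hselK
  -- admissible functions for the capacity sets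
  have had1 := fun q m => exists_admissible_of_lt (hA2 q m)
  choose φ1 hφ1mem hφ1V hφ1N using had1
  choose V1 hV1o hV1sub hV1ge using hφ1V
  have had2 := fun q m => exists_admissible_of_lt (hK2 q m)
  choose φ2 hφ2mem hφ2V hφ2N using had2
  choose V2 hV2o hV2sub hV2ge using hφ2V
  have hφ1N' : ∀ q m, hajNorm μ s p (φ1 q m) < (2:ℝ≥0∞)⁻¹ ^ (3*q+2+m) :=
    fun q m => rpow_lt_of_rpow_lt hp0 (hφ1N q m)
  have hφ2N' : ∀ q m, hajNorm μ s p (φ2 q m) < (2:ℝ≥0∞)⁻¹ ^ (3*q+2+m) :=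
    fun q m => rpow_lt_of_rpow_lt hp0 (hφ2N q m)
  -- interleaved families
  set T : ℕ → ℕ → Set X := fun m n =>
    if n % 3 = 0 then
      {x | ENNReal.ofReal (1/(((n/3 : ℕ):ℝ)+1)) < intMax μ 𝓑 (v (A (n/3) m)) x}
    else if n % 3 = 1 then
      {x | ENNReal.ofReal (1/(((n/3 : ℕ):ℝ)+1)) < intMax μ 𝓑 (w (K (n/3) m)) x}
    else U (A (n/3) m) with hT
  set Psi : ℕ → ℕ → X → ℝ := fun m n =>
    if n % 3 = 0 then φ1 (n/3) m else if n % 3 = 1 then φ2 (n/3) m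
    else v (A (n/3) m) with hPsi
  set W : ℕ → ℕ → Set X := fun m n =>
    if n % 3 = 0 then V1 (n/3) m else if n % 3 = 1 then V2 (n/3) m
    else U (A (n/3) m) with hW
  have hhalfle : (2:ℝ≥0∞)⁻¹ ≤ 1 := ENNReal.inv_le_one.2 one_le_two
  have hmemPsi : ∀ m n, MemHaj μ s p (Psi m n) := by
    intro m n
    simp only [hPsi]
    split_ifs
    · exact hφ1mem _ _
    · exact hφ2mem _ _
    · exact hvmem _
  have hWo : ∀ m n, IsOpen (W m n) := by
    intro m n
    simp only [hW]
    split_ifs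
    · exact hV1o _ _
    · exact hV2o _ _
    · exact hUo _
  have hTW : ∀ m n, T m n ⊆ W m n := by
    intro m n
    simp only [hT, hW]
    split_ifs
    · exact hV1sub _ _
    · exact hV2sub _ _
    · exact subset_rfl
  have hPsi1 : ∀ m n, ∀ x ∈ W m n, 1 ≤ Psi m n x := by
    intro m n
    simp only [hPsi, hW]
    split_ifs
    · exact hV1ge _ _
    · exact hV2ge _ _
    · exact hv1 _
  have hbPsi : ∀ m n, hajNorm μ s p (Psi m n) < (2:ℝ≥0∞)⁻¹ ^ (n+m) := by
    intro m n
    have hle : ∀ a b : ℕ, a ≤ b → (2:ℝ≥0∞)⁻¹ ^ b ≤ (2:ℝ≥0∞)⁻¹ ^ a := fun a b hab =>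
      pow_le_pow_of_le_one zero_le hhalfle hab
    simp only [hPsi]
    split_ifs with h0 h1
    · exact lt_of_lt_of_le (hφ1N' (n/3) m) (hle _ _ (by omega))
    · exact lt_of_lt_of_le (hφ2N' (n/3) m) (hle _ _ (by omega))
    · refine lt_of_lt_of_le (hvN (A (n/3) m)) (le_trans (hle _ _ (hA1 (n/3) m)) ?_)
      exact hle _ _ (by omega)
  have htsumb : ∀ m : ℕ, (∑' n : ℕ, (2:ℝ≥0∞)⁻¹ ^ (n+m)) = (2:ℝ≥0∞)⁻¹ ^ m * 2 := by
    intro m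
    simp_rw [pow_add]
    rw [ENNReal.tsum_mul_right, tsum_half_pow, mul_comm]
  have hSm : ∀ m, hCap μ s p (⋃ n, T m n)
      ≤ (2 * ((2:ℝ≥0∞)⁻¹ ^ m * 2)) ^ p := by
    intro m
    have hfb : (∑' n : ℕ, (2:ℝ≥0∞)⁻¹ ^ (n+m)) ≠ ⊤ := by
      rw [htsumb m]
      exact ENNReal.mul_ne_top (ENNReal.pow_ne_top (by norm_num)) (by norm_num)
    have h1 := hCap_iUnion_le hp (hmemPsi m) (hWo m) (hTW m) (hPsi1 m)
      (b := fun n => (2:ℝ≥0∞)⁻¹ ^ (n+m)) (hbPsi m) hfb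
    rwa [htsumb m] at h1
  -- the exceptional set
  refine ⟨⋂ m, ⋃ n, T m n, ?_, ?_⟩
  · -- capacity zero
    have hub : ∀ m, hCap μ s p (⋂ m, ⋃ n, T m n)
        ≤ (2 * ((2:ℝ≥0∞)⁻¹ ^ m * 2)) ^ p := fun m =>
      le_trans (hCap_mono (Set.iInter_subset _ m)) (hSm m)
    have htend1 : Tendsto (fun m : ℕ => 2 * ((2:ℝ≥0∞)⁻¹ ^ m * 2)) atTop (𝓝 0) := by
      have h2 : Tendsto (fun m : ℕ => (2:ℝ≥0∞)⁻¹ ^ m * 2) atTop (𝓝 (0 * 2)) :=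
        ENNReal.Tendsto.mul_const hhalf (Or.inr (by norm_num))
      rw [zero_mul] at h2
      have h3 : Tendsto (fun m : ℕ => 2 * ((2:ℝ≥0∞)⁻¹ ^ m * 2)) atTop (𝓝 (2 * 0)) :=
        ENNReal.Tendsto.const_mul h2 (Or.inr (by norm_num))
      rwa [mul_zero] at h3
    have htend0 : Tendsto (fun m : ℕ => (2 * ((2:ℝ≥0∞)⁻¹ ^ m * 2)) ^ p) atTop (𝓝 0) := by
      have hrc : Continuous fun z : ℝ≥0∞ => z ^ p := ENNReal.continuous_rpow_const
      have := (hrc.tendsto 0).comp htend1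
      simpa [Function.comp_def, ENNReal.zero_rpow_of_pos hp0] using this
    exact le_antisymm (ge_of_tendsto htend0 (Filter.Eventually.of_forall hub)) zero_le
  · -- pointwise differentiation
    intro x hxE
    have hxm : ∃ m, ∀ n, x ∉ T m n := by
      by_contra hc
      push_neg at hc
      refine hxE (Set.mem_iInter.2 fun m => ?_)
      obtain ⟨n, hn⟩ := hc m
      exact Set.mem_iUnion.2 ⟨n, hn⟩
    obtain ⟨m, hxm⟩ := hxm
    have hxv : ∀ q : ℕ, intMax μ 𝓑 (v (A q m)) x ≤ ENNReal.ofReal (1/((q:ℝ)+1)) := by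
      intro q
      have h' := hxm (3*q)
      have e1 : 3*q % 3 = 0 := by omega
      have e2 : 3*q/3 = q := by omega
      simp only [hT, e1, e2, if_pos] at h'
      simpa only [Set.mem_setOf_eq, not_lt] using h'
    have hxw : ∀ q : ℕ, intMax μ 𝓑 (w (K q m)) x ≤ ENNReal.ofReal (1/((q:ℝ)+1)) := by
      intro q
      have h' := hxm (3*q+1)
      have e1 : (3*q+1) % 3 = 1 := by omega
      have e2 : (3*q+1)/3 = q := by omega
      simp only [hT, e1, e2] at h'
      rw [if_neg (by norm_num : ¬(1:ℕ) = 0)] at h'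
      simp only [if_true] at h'
      simpa only [Set.mem_setOf_eq, not_lt] using h'
    have hxU : ∀ q : ℕ, x ∉ U (A q m) := by
      intro q
      have h' := hxm (3*q+2)
      have e1 : (3*q+2) % 3 = 2 := by omega
      have e2 : (3*q+2)/3 = q := by omega
      simp only [hT, e1, e2] at h'
      rw [if_neg (by norm_num : ¬(2:ℕ) = 0), if_neg (by norm_num : ¬(2:ℕ) = 1)] at h'
      exact h'
    -- the limit
    intro ε hε
    obtain ⟨q1, hq1⟩ := exists_nat_gt (4/ε)
    have hq1' : (0:ℝ) < (q1:ℝ)+1 := by positivity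
    have hl1 : 1/((q1:ℝ)+1) ≤ ε/4 := by
      have h4 : 4 < (q1:ℝ) * ε := (div_lt_iff₀ hε).1 hq1
      rw [div_le_div_iff₀ hq1' (by norm_num)]
      nlinarith
    obtain ⟨t, ht⟩ : ∃ t, t = K q1 m := ⟨_, rfl⟩
    have htM : intMax μ 𝓑 (w t) x ≤ ENNReal.ofReal (1/((q1:ℝ)+1)) := by
      rw [ht]; exact hxw q1
    obtain ⟨C, hC⟩ : ∃ C : ℝ, C = (t:ℝ) + |u x| := ⟨_, rfl⟩
    have hC0 : 0 ≤ C := by rw [hC]; positivity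
    obtain ⟨q2, hq2⟩ := exists_nat_gt ((C+1)*4/ε)
    have hl2 : C * (1/((q2:ℝ)+1)) ≤ ε/4 := by
      have h4 : (C+1)*4 < (q2:ℝ) * ε := (div_lt_iff₀ hε).1 hq2
      rw [mul_one_div, div_le_div_iff₀ (by positivity) (by norm_num)]
      nlinarith
    obtain ⟨a, ha⟩ : ∃ a, a = A q2 m := ⟨_, rfl⟩
    have haM : intMax μ 𝓑 (v a) x ≤ ENNReal.ofReal (1/((q2:ℝ)+1)) := by
      rw [ha]; exact hxv q2
    have haU : x ∉ U a := by rw [ha]; exact hxU q2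
    -- continuity at x within (U a)ᶜ
    have hcx : ContinuousWithinAt u (U a)ᶜ x := (hcont a) x haU
    rw [Metric.continuousWithinAt_iff] at hcx
    obtain ⟨δc, hδc0, hδc⟩ := hcx (ε/4) (by positivity)
    -- integrability radii
    obtain ⟨su, hsu_mem, hsu_int⟩ := hloc u hu x
    obtain ⟨r1, hr1, hr1sub⟩ := Metric.mem_nhds_iff.1 hsu_mem
    obtain ⟨sv, hsv_mem, hsv_int⟩ := hloc (v a) (hvmem a) x
    obtain ⟨r2, hr2, hr2sub⟩ := Metric.mem_nhds_iff.1 hsv_mem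
    obtain ⟨sw, hsw_mem, hsw_int⟩ := hloc (w t) (hwmem t) x
    obtain ⟨r3, hr3, hr3sub⟩ := Metric.mem_nhds_iff.1 hsw_mem
    set δ : ℝ := min (min δc r1) (min r2 r3) with hδ
    have hδ0 : 0 < δ := lt_min (lt_min hδc0 hr1) (lt_min hr2 hr3)
    have hδ1 : δ ≤ δc := (min_le_left _ _).trans (min_le_left _ _)
    have hδ2 : δ ≤ r1 := (min_le_left _ _).trans (min_le_right _ _)
    have hδ3 : δ ≤ r2 := (min_le_right _ _).trans (min_le_left _ _)
    have hδ4 : δ ≤ r3 := (min_le_right _ _).trans (min_le_right _ _)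
    refine ⟨δ, hδ0, ?_⟩
    intro B hB hdiam
    have hxB : x ∈ B := h𝓑.toIsDiffBasis.mem_of x B hB
    have hBmeas : MeasurableSet B := h𝓑.toIsDiffBasis.measurableSet x B hB
    have hBbd : Bornology.IsBounded B := h𝓑.toIsDiffBasis.bounded x B hB
    have hBpos : 0 < μ B := h𝓑.toIsDiffBasis.pos x B hB
    have hzsub : ∀ z ∈ B, dist z x ≤ diam B := fun z hz =>
      dist_le_diam_of_mem hBbd hz hxB
    have hsubBall : ∀ r : ℝ, diam B < r → B ⊆ ball x r := fun r hr z hz =>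
      mem_ball.2 (lt_of_le_of_lt (hzsub z hz) hr)
    have hBfin : μ B < ⊤ :=
      lt_of_le_of_lt (measure_mono (hsubBall δ hdiam)) (hball x δ hδ0).2
    have hIu : IntegrableOn u B μ :=
      hsu_int.mono_set ((hsubBall r1 (lt_of_lt_of_le hdiam hδ2)).trans hr1sub)
    have hIv : IntegrableOn (v a) B μ :=
      hsv_int.mono_set ((hsubBall r2 (lt_of_lt_of_le hdiam hδ3)).trans hr2sub)
    have hIw : IntegrableOn (w t) B μ :=
      hsw_int.mono_set ((hsubBall r3 (lt_of_lt_of_le hdiam hδ4)).trans hr3sub)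
    obtain ⟨M, hM⟩ : ∃ M : ℝ, M = (μ B).toReal := ⟨_, rfl⟩
    have hM0 : 0 < M := by rw [hM]; exact ENNReal.toReal_pos hBpos.ne' hBfin.ne
    -- lintegral bounds from the maximal function bounds
    have hlv : (∫⁻ z in B, ENNReal.ofReal |v a z| ∂μ)
        ≤ ENNReal.ofReal (1/((q2:ℝ)+1)) * μ B := by
      have h1 := (le_intMax_of_mem hB hxB (v a)).trans haM
      exact (ENNReal.div_le_iff hBpos.ne' hBfin.ne).1 h1
    have hlw : (∫⁻ z in B, ENNReal.ofReal |w t z| ∂μ)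
        ≤ ENNReal.ofReal (1/((q1:ℝ)+1)) * μ B := by
      have h1 := (le_intMax_of_mem hB hxB (w t)).trans htM
      exact (ENNReal.div_le_iff hBpos.ne' hBfin.ne).1 h1
    -- real integral bounds
    have hrv : ∫ z in B, v a z ∂μ ≤ (1/((q2:ℝ)+1)) * M := by
      have hnn : 0 ≤ᵐ[μ.restrict B] v a := Filter.Eventually.of_forall (hv0 a)
      have h2 : ENNReal.ofReal (∫ z in B, v a z ∂μ)
          = ∫⁻ z in B, ENNReal.ofReal (v a z) ∂μ :=
        ofReal_integral_eq_lintegral_ofReal hIv hnn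
      have h3 : (∫⁻ z in B, ENNReal.ofReal (v a z) ∂μ)
          = ∫⁻ z in B, ENNReal.ofReal |v a z| ∂μ :=
        lintegral_congr fun z => by rw [abs_of_nonneg (hv0 a z)]
      have h4 : ENNReal.ofReal (∫ z in B, v a z ∂μ)
          ≤ ENNReal.ofReal ((1/((q2:ℝ)+1)) * M) := by
        rw [h2, h3]
        refine le_trans hlv ?_
        rw [hM, ENNReal.ofReal_mul (by positivity), ENNReal.ofReal_toReal hBfin.ne]
      exact (ENNReal.ofReal_le_ofReal_iff (by positivity)).1 h4
    have hrw : ∫ z in B, |w t z| ∂μ ≤ (1/((q1:ℝ)+1)) * M := by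
      have hnn : 0 ≤ᵐ[μ.restrict B] fun z => |w t z| :=
        Filter.Eventually.of_forall fun z => abs_nonneg _
      have h2 : ENNReal.ofReal (∫ z in B, |w t z| ∂μ)
          = ∫⁻ z in B, ENNReal.ofReal |w t z| ∂μ :=
        ofReal_integral_eq_lintegral_ofReal hIw.abs hnn
      have h4 : ENNReal.ofReal (∫ z in B, |w t z| ∂μ)
          ≤ ENNReal.ofReal ((1/((q1:ℝ)+1)) * M) := by
        rw [h2]
        refine le_trans hlw ?_
        rw [hM, ENNReal.ofReal_mul (by positivity), ENNReal.ofReal_toReal hBfin.ne]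
      exact (ENNReal.ofReal_le_ofReal_iff (by positivity)).1 h4
    -- pointwise bound on B
    have hpt : ∀ z ∈ B, |u z - u x| ≤ ε/4 + C * v a z + |w t z| := by
      intro z hz
      by_cases hzU : z ∈ U a
      · have h1 : |u z| ≤ (t:ℝ) + |w t z| := hwbound t z
        have h2 : 1 ≤ v a z := hv1 a z hzU
        have h3 : |u z - u x| ≤ |u z| + |u x| := abs_sub _ _
        have h5 : C * 1 ≤ C * v a z := mul_le_mul_of_nonneg_left h2 hC0
        have h6 : (0:ℝ) < ε/4 := by positivity
        rw [mul_one] at h5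
        calc |u z - u x| ≤ |u z| + |u x| := h3
          _ ≤ ((t:ℝ) + |w t z|) + |u x| := by linarith
          _ = C + |w t z| := by rw [hC]; ring
          _ ≤ C * v a z + |w t z| := by linarith
          _ ≤ ε/4 + (C * v a z + |w t z|) := le_add_of_nonneg_left h6.le
          _ = ε/4 + C * v a z + |w t z| := by ring
      · have hd : dist z x < δc := lt_of_le_of_lt (hzsub z hz)
          (lt_of_lt_of_le hdiam hδ1)
        have h1 := hδc hzU hd
        rw [Real.dist_eq] at h1
        have h2 : 0 ≤ C * v a z := mul_nonneg hC0 (hv0 a z)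
        have h3 : 0 ≤ |w t z| := abs_nonneg _
        linarith
    -- integral estimate
    have hIconst : IntegrableOn (fun _ : X => u x) B μ :=
      integrableOn_const hBfin.ne
    have hIdiff : IntegrableOn (fun z => u z - u x) B μ := hIu.sub hIconst
    have hIrhs : IntegrableOn (fun z => ε/4 + C * v a z + |w t z|) B μ :=
      ((integrableOn_const hBfin.ne).add (hIv.const_mul C)).add hIw.abs
    have hint1 : ∫ z in B, |u z - u x| ∂μ
        ≤ ∫ z in B, (ε/4 + C * v a z + |w t z|) ∂μ :=
      setIntegral_mono_on hIdiff.abs hIrhs hBmeas hpt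
    have hint2 : ∫ z in B, (ε/4 + C * v a z + |w t z|) ∂μ
        = (ε/4) * M + C * ∫ z in B, v a z ∂μ + ∫ z in B, |w t z| ∂μ := by
      have hi2 : IntegrableOn (fun _ : X => ε/4) B μ := integrableOn_const hBfin.ne
      have hi3 : IntegrableOn (fun z => C * v a z) B μ := hIv.const_mul C
      have hi1 : IntegrableOn (fun z => ε/4 + C * v a z) B μ := hi2.add hi3
      have hi4 : IntegrableOn (fun z => |w t z|) B μ := hIw.abs
      rw [integral_add hi1 hi4, integral_add hi2 hi3,
        integral_const_mul, setIntegral_const, smul_eq_mul, measureReal_def, ← hM, mul_comm M (ε/4)]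
    have hint3 : ∫ z in B, |u z - u x| ∂μ
        ≤ (ε/4) * M + C * ((1/((q2:ℝ)+1)) * M) + (1/((q1:ℝ)+1)) * M := by
      refine le_trans hint1 ?_
      rw [hint2]
      have h5 : C * ∫ z in B, v a z ∂μ ≤ C * ((1/((q2:ℝ)+1)) * M) :=
        mul_le_mul_of_nonneg_left hrv hC0
      linarith
    -- conclude
    have hconst : ∫ z in B, u x ∂μ = M * u x := by
      rw [setIntegral_const, smul_eq_mul, measureReal_def, ← hM]
    have hdiffint : ∫ z in B, (u z - u x) ∂μ = (∫ z in B, u z ∂μ) - M * u x := by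
      rw [integral_sub hIu hIconst, hconst]
    have habs : |(∫ z in B, u z ∂μ) - M * u x|
        ≤ (ε/4) * M + C * ((1/((q2:ℝ)+1)) * M) + (1/((q1:ℝ)+1)) * M := by
      rw [← hdiffint]
      refine le_trans ?_ hint3
      have := norm_integral_le_integral_norm (μ := μ.restrict B) (fun z => u z - u x)
      simpa [Real.norm_eq_abs] using this
    have hMne : M ≠ 0 := hM0.ne'
    show |(⨍ z in B, u z ∂μ) - u x| < ε
    rw [setAverage_eq, smul_eq_mul, measureReal_def]
    have heq : M⁻¹ * (∫ z in B, u z ∂μ) - u x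
        = M⁻¹ * ((∫ z in B, u z ∂μ) - M * u x) := by
      field_simp
    rw [← hM, heq, abs_mul, abs_of_nonneg (by positivity : (0:ℝ) ≤ M⁻¹)]
    calc M⁻¹ * |(∫ z in B, u z ∂μ) - M * u x|
        ≤ M⁻¹ * ((ε/4) * M + C * ((1/((q2:ℝ)+1)) * M) + (1/((q1:ℝ)+1)) * M) :=
          mul_le_mul_of_nonneg_left habs (by positivity)
      _ = ε/4 + C * (1/((q2:ℝ)+1)) + 1/((q1:ℝ)+1) := by
          field_simp
      _ < ε := by linarith

end PartB
/-- for a Busemann–Feller basis on a separable space and `1 < p < ∞`,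
assuming Hajłasz functions are locally integrable: (1) ⇒ (2) and (2) ⇒ (3), for the
capacitary conditions on the maximal function and differentiation of integral averages. -/
theorem stmt19 {X : Type*} [MetricSpace X] [MeasurableSpace X] [BorelSpace X]
    [TopologicalSpace.SeparableSpace X]
    (μ : Measure X)
    (hball : ∀ (x : X) (r : ℝ), 0 < r → 0 < μ (ball x r) ∧ μ (ball x r) < ⊤)
    (𝓑 : X → Set (Set X)) (h𝓑 : IsBFBasis μ 𝓑)
    (s p : ℝ) (hs0 : 0 < s) (hs1 : s ≤ 1) (hp : 1 < p)
    (hloc : ∀ u : X → ℝ, MemHaj μ s p u → LocallyIntegrable u μ) :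
    ((∀ u : X → ℝ, MemHaj μ s p u →
        Tendsto (fun lam : ℝ => hCap μ s p {x | ENNReal.ofReal lam < intMax μ 𝓑 u x})
          atTop (𝓝 0)) →
      (∀ lam : ℝ, 0 < lam → ∀ uk : ℕ → X → ℝ, (∀ k, MemHaj μ s p (uk k)) →
        Tendsto (fun k => hajNorm μ s p (uk k)) atTop (𝓝 0) →
        Tendsto (fun k => hCap μ s p {x | ENNReal.ofReal lam < intMax μ 𝓑 (uk k) x})
          atTop (𝓝 0))) ∧
    ((∀ lam : ℝ, 0 < lam → ∀ uk : ℕ → X → ℝ, (∀ k, MemHaj μ s p (uk k)) →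
        Tendsto (fun k => hajNorm μ s p (uk k)) atTop (𝓝 0) →
        Tendsto (fun k => hCap μ s p {x | ENNReal.ofReal lam < intMax μ 𝓑 (uk k) x})
          atTop (𝓝 0)) →
      (∀ u : X → ℝ, MemHaj μ s p u → QuasiCont μ s p u →
        ∃ E : Set X, hCap μ s p E = 0 ∧ ∀ x ∉ E,
          BasisLim 𝓑 x (fun B => ⨍ z in B, u z ∂μ) (u x))) := by
  constructor
  · intro H1
    exact partA μ 𝓑 s p hp H1
  · intro H2 u hu hqc
    exact partB μ hball 𝓑 h𝓑 s p hp hloc H2 u hu hqc
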